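/- Let r be an acyclic orientation of the n-dimensional hypercube graph Q_n on the genotypes {0,1}^n (a fitness graph), i.e., for every pair of genotypes at Hamming distance 1 exactly one of r g h, r h g holds, r relates only such pairs, and r admits no directed cycle. Then every fitness landscape w : {0,1}^n → ℝ compatible with r (meaning r g h implies w(g) < w(h)) has positive n-way epistasis if and only if there exists a bijection π from the odd genotypes to the even genotypes such that for every odd genotype o there is a directed path in r from o to π(o). -/

import Mathlib

open Finset

/-- Genotypes of an `n`-locus biallelic system. -/
abbrev Genotype (n : ℕ) := Fin n → Bool

/-- The number of coordinates of a genotype equal to 1 (true). -/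
def dOnes {n : ℕ} (g : Genotype n) : ℕ :=
  (Finset.univ.filter (fun i => g i = true)).card

/-- The total `n`-way epistasis of a fitness landscape:
sum of fitnesses over even genotypes minus sum over odd genotypes. -/
noncomputable def epi (n : ℕ) (w : Genotype n → ℝ) : ℝ :=
  ∑ g ∈ Finset.univ.filter (fun g : Genotype n => Even (dOnes g)), w g -
    ∑ g ∈ Finset.univ.filter (fun g : Genotype n => Odd (dOnes g)), w g

/-- Flipping one coordinate changes `dOnes` by exactly one. -/
lemma dOnes_flip {n : ℕ} (g : Genotype n) (i : Fin n) :
    dOnes (Function.update g i (!(g i))) = dOnes g + 1 ∨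
      dOnes g = dOnes (Function.update g i (!(g i))) + 1 := by
  classical
  by_cases hgi : g i = true
  · right
    have hmem : i ∈ Finset.univ.filter (fun j => g j = true) := by simp [hgi]
    have hset : Finset.univ.filter (fun j => Function.update g i (!(g i)) j = true)
        = (Finset.univ.filter (fun j => g j = true)).erase i := by
      ext j
      by_cases hj : j = i <;> simp [Function.update, hj, hgi]
    have hpos : 0 < (Finset.univ.filter (fun j => g j = true)).card :=
      Finset.card_pos.2 ⟨i, hmem⟩
    unfold dOnes
    rw [hset, Finset.card_erase_of_mem hmem]
    omega
  · left
    have hmem : i ∉ Finset.univ.filter (fun j => g j = true) := by simp [hgi]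
    have hset : Finset.univ.filter (fun j => Function.update g i (!(g i)) j = true)
        = insert i (Finset.univ.filter (fun j => g j = true)) := by
      ext j
      by_cases hj : j = i <;> simp [Function.update, hj, hgi]
    unfold dOnes
    rw [hset, Finset.card_insert_of_notMem hmem]

lemma flip_even {n : ℕ} (g : Genotype n) (i : Fin n) (h : Odd (dOnes g)) :
    Even (dOnes (Function.update g i (!(g i)))) := by
  rcases dOnes_flip g i with h1 | h1 <;>
    (rw [Nat.odd_iff] at h; rw [Nat.even_iff]; omega)

lemma flip_odd {n : ℕ} (g : Genotype n) (i : Fin n) (h : Even (dOnes g)) :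
    Odd (dOnes (Function.update g i (!(g i)))) := by
  rcases dOnes_flip g i with h1 | h1 <;>
    (rw [Nat.even_iff] at h; rw [Nat.odd_iff]; omega)

lemma flip_flip_update {n : ℕ} (g : Genotype n) (i : Fin n) :
    Function.update (Function.update g i (!(g i))) i
      (!(Function.update g i (!(g i)) i)) = g := by
  funext j
  by_cases hj : j = i <;> simp [Function.update, hj]

/-- Flipping coordinate `i` gives a bijection between odd and even genotypes. -/
def flipEquiv {n : ℕ} (i : Fin n) :
    {g : Genotype n // Odd (dOnes g)} ≃ {g : Genotype n // Even (dOnes g)} where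
  toFun o := ⟨Function.update o.1 i (!(o.1 i)), flip_even o.1 i o.2⟩
  invFun e := ⟨Function.update e.1 i (!(e.1 i)), flip_odd e.1 i e.2⟩
  left_inv o := Subtype.ext (flip_flip_update o.1 i)
  right_inv e := Subtype.ext (flip_flip_update e.1 i)

theorem fitness_graph_implies_epistasis_iff_path_matching
    (n : ℕ)
    (r : Genotype n → Genotype n → Prop)
    (hedge : ∀ g h, r g h → hammingDist g h = 1)
    (horient : ∀ g h : Genotype n, hammingDist g h = 1 → (r g h ↔ ¬ r h g))
    (hacyclic : ∀ g, ¬ Relation.TransGen r g g) :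
    (∀ w : Genotype n → ℝ, (∀ g h, r g h → w g < w h) → 0 < epi n w) ↔
      (∃ π : {g : Genotype n // Odd (dOnes g)} ≃ {g : Genotype n // Even (dOnes g)},
        ∀ o, Relation.TransGen r o.val (π o).val) := by
  classical
  constructor
  · intro hpos
    -- First dispose of n = 0, where the hypothesis is contradictory.
    rcases Nat.eq_zero_or_pos n with hn | hn
    · exfalso
      subst hn
      have hrempty : ∀ g h : Genotype 0, r g h → (fun _ : Genotype 0 => (0:ℝ)) g <
          (fun _ : Genotype 0 => (0:ℝ)) h := by
        intro g h hr
        have hgh : g = h := Subsingleton.elim g h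
        have := hedge g h hr
        rw [hgh, hammingDist_self] at this
        omega
      have := hpos (fun _ => 0) hrempty
      simp [epi] at this
    -- Hall's condition for the reachability relation.
    set O := {g : Genotype n // Odd (dOnes g)} with hO
    set E := {g : Genotype n // Even (dOnes g)} with hE
    let t : O → Finset E := fun o => Finset.univ.filter (fun e => Relation.TransGen r o.1 e.1)
    have hall : ∀ s : Finset O, s.card ≤ (s.biUnion t).card := by
      by_contra hns
      push_neg at hns
      obtain ⟨s, hs⟩ := hns
      -- Construct a compatible landscape with nonpositive epistasis.
      let w0 : Genotype n → ℝ :=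
        fun g => ((Finset.univ.filter (fun x => Relation.ReflTransGen r x g)).card : ℝ)
      have hw0 : ∀ g h, r g h → w0 g < w0 h := by
        intro g h hr
        have hsub : Finset.univ.filter (fun x => Relation.ReflTransGen r x g) ⊂
            Finset.univ.filter (fun x => Relation.ReflTransGen r x h) := by
          constructor
          · intro x hx
            simp only [Finset.mem_filter, Finset.mem_univ, true_and] at hx ⊢
            exact hx.tail hr
          · intro hcon
            have hh : h ∈ Finset.univ.filter (fun x => Relation.ReflTransGen r x h) := by
              simp [Relation.ReflTransGen.refl]
            have := hcon hh
            simp only [Finset.mem_filter, Finset.mem_univ, true_and] at this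
            exact hacyclic g ((Relation.TransGen.single hr).trans_left this)
        have := Finset.card_lt_card hsub
        simp only [w0]
        exact_mod_cast this
      let U : Genotype n → Prop := fun g => ∃ o ∈ s, o.1 = g ∨ Relation.TransGen r o.1 g
      have hUup : ∀ g h, r g h → U g → U h := by
        rintro g h hr ⟨o, ho, hog⟩
        refine ⟨o, ho, Or.inr ?_⟩
        rcases hog with rfl | htg
        · exact Relation.TransGen.single hr
        · exact htg.tail hr
      set M : ℝ := |epi n w0| + 1 with hMdef
      have hM : 0 < M := by positivity
      let w : Genotype n → ℝ := fun g => w0 g + (if U g then M else 0)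
      have hcomp : ∀ g h, r g h → w g < w h := by
        intro g h hr
        have h1 : w0 g < w0 h := hw0 g h hr
        have h2 : (if U g then M else 0) ≤ (if U h then M else 0) := by
          by_cases hug : U g
          · rw [if_pos hug, if_pos (hUup g h hr hug)]
          · rw [if_neg hug]
            by_cases huh : U h <;> simp [huh, hM.le]
        simpa [w] using add_lt_add_of_lt_of_le h1 h2
      have hepi := hpos w hcomp
      -- count evens and odds in U
      set cE : ℕ := ((Finset.univ.filter (fun g : Genotype n => Even (dOnes g))).filter U).card
        with hcEdef
      set cO : ℕ := ((Finset.univ.filter (fun g : Genotype n => Odd (dOnes g))).filter U).card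
        with hcOdef
      have hsumind : ∀ F : Finset (Genotype n),
          (∑ g ∈ F, (if U g then M else 0)) = ((F.filter U).card : ℝ) * M := by
        intro F
        rw [← Finset.sum_filter, Finset.sum_const, nsmul_eq_mul]
      have hsplit : epi n w = epi n w0 + ((cE : ℝ) - (cO : ℝ)) * M := by
        simp only [epi, w, Finset.sum_add_distrib, hsumind, hcEdef, hcOdef]
        push_cast
        ring
      -- cE is bounded by the size of the neighborhood of s
      have hcE : cE ≤ (s.biUnion t).card := by
        have hsub : (Finset.univ.filter (fun g : Genotype n => Even (dOnes g))).filter U ⊆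
            (s.biUnion t).image Subtype.val := by
          intro g hg
          simp only [Finset.mem_filter, Finset.mem_univ, true_and] at hg
          obtain ⟨hev, o, ho, hog⟩ := hg
          rcases hog with rfl | htg
          · exact absurd hev (Nat.not_even_iff_odd.2 o.2)
          · exact Finset.mem_image.2 ⟨⟨g, hev⟩, Finset.mem_biUnion.2
              ⟨o, ho, by simp [t, htg]⟩, rfl⟩
        calc cE ≤ ((s.biUnion t).image Subtype.val).card := Finset.card_le_card hsub
          _ ≤ (s.biUnion t).card := Finset.card_image_le
      -- cO is at least the size of s
      have hcO : s.card ≤ cO := by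
        have hsub : s.image Subtype.val ⊆
            (Finset.univ.filter (fun g : Genotype n => Odd (dOnes g))).filter U := by
          intro g hg
          obtain ⟨o, ho, rfl⟩ := Finset.mem_image.1 hg
          simp only [Finset.mem_filter, Finset.mem_univ, true_and]
          exact ⟨o.2, o, ho, Or.inl rfl⟩
        calc s.card = (s.image Subtype.val).card :=
              (Finset.card_image_of_injective s Subtype.val_injective).symm
          _ ≤ cO := Finset.card_le_card hsub
      have hlt : (cE : ℝ) - (cO : ℝ) ≤ -1 := by
        have : cE + 1 ≤ cO := by omega
        have := (Nat.cast_le (α := ℝ)).2 this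
        push_cast at this
        linarith
      have habs : epi n w0 ≤ |epi n w0| := le_abs_self _
      have : ((cE : ℝ) - (cO : ℝ)) * M ≤ (-1) * M :=
        mul_le_mul_of_nonneg_right hlt hM.le
      rw [hsplit] at hepi
      linarith [hepi, this, habs, hMdef, hM]
    obtain ⟨f, hfinj, hft⟩ := (Finset.all_card_le_biUnion_card_iff_exists_injective t).1 hall
    have hcard : Fintype.card O = Fintype.card E := Fintype.card_congr (flipEquiv ⟨0, hn⟩)
    have hbij : Function.Bijective f :=
      (Fintype.bijective_iff_injective_and_card f).2 ⟨hfinj, hcard⟩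
    refine ⟨Equiv.ofBijective f hbij, fun o => ?_⟩
    have := hft o
    simp only [t, Finset.mem_filter, Finset.mem_univ, true_and] at this
    exact this
  · rintro ⟨π, hπ⟩ w hc
    have hstep : ∀ {a b : Genotype n}, Relation.TransGen r a b → w a < w b := by
      intro a b h
      induction h with
      | single h => exact hc _ _ h
      | tail _ h ih => exact ih.trans (hc _ _ h)
    have hEsum : (∑ g ∈ Finset.univ.filter (fun g : Genotype n => Even (dOnes g)), w g)
        = ∑ e : {g : Genotype n // Even (dOnes g)}, w e.1 := by
      refine Finset.sum_subtype _ (fun x => ?_) w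
      simp
    have hOsum : (∑ g ∈ Finset.univ.filter (fun g : Genotype n => Odd (dOnes g)), w g)
        = ∑ o : {g : Genotype n // Odd (dOnes g)}, w o.1 := by
      refine Finset.sum_subtype _ (fun x => ?_) w
      simp
    have hreindex : (∑ e : {g : Genotype n // Even (dOnes g)}, w e.1)
        = ∑ o : {g : Genotype n // Odd (dOnes g)}, w (π o).1 :=
      (Equiv.sum_comp π (fun e => w e.1)).symm
    have hepi : epi n w = ∑ o : {g : Genotype n // Odd (dOnes g)}, (w (π o).1 - w o.1) := by
      rw [epi, hEsum, hOsum, hreindex, Finset.sum_sub_distrib]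
    have hne : Nonempty {g : Genotype n // Odd (dOnes g)} := by
      refine ⟨π.symm ⟨fun _ => false, ?_⟩⟩
      simp [dOnes]
    rw [hepi]
    refine Finset.sum_pos (fun o _ => ?_) Finset.univ_nonempty
    exact sub_pos.2 (hstep (hπ o))
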